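/- Let $X_1, \ldots, X_{d+1}$ be self-adjoint bounded operators with $X_j^2 = I$ for each $j$ (self-adjoint unitaries, not assumed to commute), and let $s > 0$. Define block operators on $H \oplus H$: $Z_j = \begin{pmatrix} X_j & \frac{s}{2}(X_{d+1}X_j - X_j X_{d+1}) \\ \frac{s}{2}(X_j X_{d+1} - X_{d+1}X_j) & X_j \end{pmatrix}$ for $1 \leq j \leq d$, and $Z_{d+1} = \begin{pmatrix} X_{d+1} & \frac{1}{s} I \\ \frac{1}{s} I & -X_{d+1} \end{pmatrix}$. Then each $Z_j$ is self-adjoint, $Z_j$ commutes with $Z_{d+1}$ for every $1 \leq j \leq d$, each $Z_j$ ($j \leq d$) dilates $X_j$ with $\|Z_j\| \leq \sqrt{1+s^2}$, and $Z_{d+1}$ dilates $X_{d+1}$ with $\|Z_{d+1}\| \leq \sqrt{1 + 1/s^2}$. -/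

import Mathlib

set_option synthInstance.maxHeartbeats 1000000
set_option maxHeartbeats 1000000

noncomputable instance prodLpCompleteSpace'
    {H : Type*} [NormedAddCommGroup H] [InnerProductSpace ℂ H] [CompleteSpace H] :
    CompleteSpace (WithLp 2 (H × H)) :=
  inferInstance

section BlockDilationAux

variable {E : Type*} [NormedAddCommGroup E] [InnerProductSpace ℂ E]

local notation "⟪" x ", " y "⟫" => @inner ℂ _ _ x y
local notation "conj" => starRingEnd ℂ

private lemma blockAux_opNorm_le (T : E →L[ℂ] E) {c : ℝ} (hc : 0 ≤ c)
    (h : ∀ x, ‖T x‖ ^ 2 ≤ c * ‖x‖ ^ 2) : ‖T‖ ≤ Real.sqrt c := by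
  refine T.opNorm_le_bound (Real.sqrt_nonneg c) fun x => ?_
  calc ‖T x‖ = Real.sqrt (‖T x‖ ^ 2) := (Real.sqrt_sq (norm_nonneg _)).symm
    _ ≤ Real.sqrt (c * ‖x‖ ^ 2) := Real.sqrt_le_sqrt (h x)
    _ = Real.sqrt c * ‖x‖ := by rw [Real.sqrt_mul hc, Real.sqrt_sq (norm_nonneg _)]

private lemma blockAux_symm_j (A C : E →L[ℂ] E) (s : ℝ)
    (hA : ∀ v w, ⟪A v, w⟫ = ⟪v, A w⟫) (hC : ∀ v w, ⟪C v, w⟫ = ⟪v, C w⟫)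
    (a b c d : E) :
    (⟪A a + (s/2 : ℂ) • ((C * A - A * C) b), c⟫ +
      ⟪(s/2 : ℂ) • ((A * C - C * A) a) + A b, d⟫)
    = (⟪a, A c + (s/2 : ℂ) • ((C * A - A * C) d)⟫ +
      ⟪b, (s/2 : ℂ) • ((A * C - C * A) c) + A d⟫) := by
  simp only [ContinuousLinearMap.sub_apply, ContinuousLinearMap.mul_apply,
    inner_add_left, inner_add_right, inner_sub_left, inner_sub_right,
    inner_smul_left, inner_smul_right, hA, hC, map_div₀, Complex.conj_ofReal, map_ofNat]
  ring

private lemma blockAux_symm_last (C : E →L[ℂ] E) (s : ℝ)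
    (hC : ∀ v w, ⟪C v, w⟫ = ⟪v, C w⟫) (a b c d : E) :
    (⟪C a + (s:ℂ)⁻¹ • b, c⟫ + ⟪(s:ℂ)⁻¹ • a - C b, d⟫)
    = (⟪a, C c + (s:ℂ)⁻¹ • d⟫ + ⟪b, (s:ℂ)⁻¹ • c - C d⟫) := by
  simp only [inner_add_left, inner_add_right, inner_sub_left, inner_sub_right,
    inner_smul_left, inner_smul_right, hC, map_inv₀, Complex.conj_ofReal]
  ring

private lemma blockAux_comm1 (A C : E →L[ℂ] E) (s : ℝ) (hs : 0 < s)
    (hA2 : ∀ v, A (A v) = v) (hC2 : ∀ v, C (C v) = v) (h k : E) :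
    A (C h + (s:ℂ)⁻¹ • k) + (s/2 : ℂ) • ((C * A - A * C) ((s:ℂ)⁻¹ • h - C k))
    = C (A h + (s/2 : ℂ) • ((C * A - A * C) k)) +
        (s:ℂ)⁻¹ • ((s/2 : ℂ) • ((A * C - C * A) h) + A k) := by
  have hsne : (s:ℂ) ≠ 0 := by exact_mod_cast hs.ne'
  simp only [ContinuousLinearMap.sub_apply, ContinuousLinearMap.mul_apply,
    map_add, map_sub, map_smul, hA2, hC2, smul_sub, smul_add, smul_smul]
  match_scalars <;> field_simp <;> ring

private lemma blockAux_comm2 (A C : E →L[ℂ] E) (s : ℝ) (hs : 0 < s)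
    (hA2 : ∀ v, A (A v) = v) (hC2 : ∀ v, C (C v) = v) (h k : E) :
    (s/2 : ℂ) • ((A * C - C * A) (C h + (s:ℂ)⁻¹ • k)) + A ((s:ℂ)⁻¹ • h - C k)
    = (s:ℂ)⁻¹ • (A h + (s/2 : ℂ) • ((C * A - A * C) k)) -
        C ((s/2 : ℂ) • ((A * C - C * A) h) + A k) := by
  have hsne : (s:ℂ) ≠ 0 := by exact_mod_cast hs.ne'
  simp only [ContinuousLinearMap.sub_apply, ContinuousLinearMap.mul_apply,
    map_add, map_sub, map_smul, hA2, hC2, smul_sub, smul_add, smul_smul]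
  match_scalars <;> field_simp <;> ring

private lemma blockAux_norm_last (C : E →L[ℂ] E) (s : ℝ) (hs : 0 < s)
    (hC : ∀ v w, ⟪C v, w⟫ = ⟪v, C w⟫) (hCn : ∀ v, ‖C v‖ = ‖v‖) (a b : E) :
    ‖C a + (s:ℂ)⁻¹ • b‖ ^ 2 + ‖(s:ℂ)⁻¹ • a - C b‖ ^ 2
      = (1 + 1/s^2) * (‖a‖^2 + ‖b‖^2) := by
  have e1 := norm_add_sq (𝕜 := ℂ) (C a) ((s:ℂ)⁻¹ • b)
  have e2 := norm_sub_sq (𝕜 := ℂ) ((s:ℂ)⁻¹ • a) (C b)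
  have hcross : (⟪C a, (s:ℂ)⁻¹ • b⟫ : ℂ).re = (⟪(s:ℂ)⁻¹ • a, C b⟫ : ℂ).re := by
    rw [inner_smul_right, inner_smul_left, hC]
    simp [Complex.conj_ofReal]
  rw [e1, e2]
  have h1 : ‖(s:ℂ)⁻¹ • a‖ = s⁻¹ * ‖a‖ := by
    rw [norm_smul]; simp [abs_of_pos hs]
  have h2 : ‖(s:ℂ)⁻¹ • b‖ = s⁻¹ * ‖b‖ := by
    rw [norm_smul]; simp [abs_of_pos hs]
  rw [hCn, hCn, h1, h2]
  rw [show (RCLike.re ⟪C a, (s:ℂ)⁻¹ • b⟫ : ℝ) = (⟪C a, (s:ℂ)⁻¹ • b⟫ : ℂ).re from rfl,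
      show (RCLike.re ⟪(s:ℂ)⁻¹ • a, C b⟫ : ℝ) = (⟪(s:ℂ)⁻¹ • a, C b⟫ : ℂ).re from rfl,
      hcross]
  field_simp
  ring

private lemma blockAux_norm_j (A C : E →L[ℂ] E) (s : ℝ) (hs : 0 < s)
    (hA : ∀ v w, ⟪A v, w⟫ = ⟪v, A w⟫) (hC : ∀ v w, ⟪C v, w⟫ = ⟪v, C w⟫)
    (hA2 : ∀ v, A (A v) = v) (hAn : ∀ v, ‖A v‖ = ‖v‖) (hCn : ∀ v, ‖C v‖ = ‖v‖)
    (a b : E) :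
    ‖A a + (s/2:ℂ) • ((C * A - A * C) b)‖^2 + ‖(s/2:ℂ) • ((A * C - C * A) a) + A b‖^2
      ≤ (1 + s^2) * (‖a‖^2 + ‖b‖^2) := by
  have hW : ∀ v, ‖(s/2:ℂ) • ((C * A - A * C) v)‖ ≤ s * ‖v‖ := by
    intro v
    rw [norm_smul]
    have h2 : ‖(C * A - A * C) v‖ ≤ 2 * ‖v‖ := by
      calc ‖(C * A - A * C) v‖ = ‖C (A v) - A (C v)‖ := rfl
        _ ≤ ‖C (A v)‖ + ‖A (C v)‖ := norm_sub_le _ _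
        _ = 2 * ‖v‖ := by rw [hCn, hAn, hAn, hCn]; ring
    have hns : ‖(s/2 : ℂ)‖ = s/2 := by
      rw [show (s/2:ℂ) = ((s/2 : ℝ) : ℂ) by push_cast; ring]
      simp [Complex.norm_real, abs_of_pos hs]
    rw [hns]
    calc (s/2) * ‖(C*A - A*C) v‖ ≤ (s/2) * (2 * ‖v‖) := by
          apply mul_le_mul_of_nonneg_left h2 (by positivity)
      _ = s * ‖v‖ := by ring
  have hneg : (s/2:ℂ) • ((A * C - C * A) a) = -((s/2:ℂ) • ((C * A - A * C) a)) := by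
    simp only [ContinuousLinearMap.sub_apply, ContinuousLinearMap.mul_apply,
      ← smul_neg, neg_sub]
  rw [hneg, neg_add_eq_sub, norm_add_sq (𝕜 := ℂ), norm_sub_sq (𝕜 := ℂ)]
  have hconj : ⟪A a, (s/2:ℂ) • ((C*A - A*C) b)⟫
      = conj ⟪A b, (s/2:ℂ) • ((C*A - A*C) a)⟫ := by
    simp only [ContinuousLinearMap.sub_apply, ContinuousLinearMap.mul_apply,
      inner_smul_right, inner_sub_right, inner_smul_left, inner_sub_left,
      map_smul, map_sub, map_mul, inner_conj_symm,
      hA, hC, hA2, map_div₀, Complex.conj_ofReal, map_ofNat]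
  have hcross : RCLike.re ⟪A a, (s/2:ℂ) • ((C*A - A*C) b)⟫
      = RCLike.re ⟪A b, (s/2:ℂ) • ((C*A - A*C) a)⟫ := by
    rw [hconj]; exact RCLike.conj_re _
  rw [hcross]
  have hWa := pow_le_pow_left₀ (norm_nonneg _) (hW a) 2
  have hWb := pow_le_pow_left₀ (norm_nonneg _) (hW b) 2
  rw [hAn, hAn]
  nlinarith [norm_nonneg a, norm_nonneg b, sq_nonneg s]

end BlockDilationAux

section BlockDilationMain

local notation "⟪" x ", " y "⟫" => @inner ℂ _ _ x y

/-- **Commuting block dilation of self-adjoint unitaries.**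
Let `X 1, …, X (d+1)` be self-adjoint operators with `X j ² = I` (not assumed to
commute) and let `s > 0`.  Consider the block operators on `H ⊕₂ H`:
`Z j = [[X j, (s/2)(X_{d+1} X j - X j X_{d+1})], [(s/2)(X j X_{d+1} - X_{d+1} X j), X j]]`
for `j ≤ d` and `Z_{d+1} = [[X_{d+1}, (1/s) I], [(1/s) I, -X_{d+1}]]`.
Then each `Z j` is self-adjoint, each `Z j` (`j ≤ d`) commutes with `Z_{d+1}`,
each `Z j` dilates `X j`, `‖Z j‖ ≤ √(1+s²)` for `j ≤ d`,
and `‖Z_{d+1}‖ ≤ √(1+1/s²)`. -/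
theorem block_commuting_dilation
    {H : Type*} [NormedAddCommGroup H] [InnerProductSpace ℂ H] [CompleteSpace H]
    {d : ℕ} {s : ℝ} (hs : 0 < s)
    (X : Fin (d + 1) → H →L[ℂ] H)
    (hsa : ∀ j, IsSelfAdjoint (X j))
    (hunit : ∀ j, (X j) ^ 2 = 1)
    (Z : Fin (d + 1) → WithLp 2 (H × H) →L[ℂ] WithLp 2 (H × H))
    (hZ : ∀ (j : Fin d) (h k : H),
      Z j.castSucc ((WithLp.equiv 2 (H × H)).symm (h, k)) =
        (WithLp.equiv 2 (H × H)).symm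
          (X j.castSucc h +
              ((s / 2 : ℂ)) •
                ((X (Fin.last d) * X j.castSucc - X j.castSucc * X (Fin.last d)) k),
            ((s / 2 : ℂ)) •
                ((X j.castSucc * X (Fin.last d) - X (Fin.last d) * X j.castSucc) h) +
              X j.castSucc k))
    (hZlast : ∀ h k : H,
      Z (Fin.last d) ((WithLp.equiv 2 (H × H)).symm (h, k)) =
        (WithLp.equiv 2 (H × H)).symm
          (X (Fin.last d) h + ((s : ℂ))⁻¹ • k,
            ((s : ℂ))⁻¹ • h - X (Fin.last d) k)) :
    (∀ j, IsSelfAdjoint (Z j)) ∧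
    (∀ j : Fin d, Commute (Z j.castSucc) (Z (Fin.last d))) ∧
    (∀ (j : Fin (d + 1)) (h : H),
      ((WithLp.equiv 2 (H × H)) (Z j ((WithLp.equiv 2 (H × H)).symm (h, 0)))).1 = X j h) ∧
    (∀ j : Fin d, ‖Z j.castSucc‖ ≤ Real.sqrt (1 + s ^ 2)) ∧
    ‖Z (Fin.last d)‖ ≤ Real.sqrt (1 + 1 / s ^ 2) := by
  have hsq : ∀ j (h : H), X j (X j h) = h := by
    intro j h
    have := congrArg (fun T : H →L[ℂ] H => T h) (hunit j)
    simpa [pow_two] using this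
  have hsym : ∀ j (v w : H), ⟪X j v, w⟫ = ⟪v, X j w⟫ := fun j =>
    ContinuousLinearMap.isSelfAdjoint_iff_isSymmetric.mp (hsa j)
  have hXn : ∀ j (v : H), ‖X j v‖ = ‖v‖ := by
    intro j v
    have h2 : ⟪X j v, X j v⟫ = ⟪v, v⟫ := by rw [hsym, hsq]
    have h3 : ‖X j v‖ ^ 2 = ‖v‖ ^ 2 := by
      rw [← inner_self_eq_norm_sq (𝕜 := ℂ), ← inner_self_eq_norm_sq (𝕜 := ℂ), h2]
    calc ‖X j v‖ = Real.sqrt (‖X j v‖ ^ 2) := (Real.sqrt_sq (norm_nonneg _)).symm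
      _ = Real.sqrt (‖v‖ ^ 2) := by rw [h3]
      _ = ‖v‖ := Real.sqrt_sq (norm_nonneg _)
  have hPmk : ∀ x : WithLp 2 (H × H),
      x = (WithLp.equiv 2 (H × H)).symm
        ((WithLp.equiv 2 (H × H) x).1, (WithLp.equiv 2 (H × H) x).2) := fun _ => rfl
  have hIn : ∀ a b c d2 : H,
      ⟪(WithLp.equiv 2 (H × H)).symm (a, b), (WithLp.equiv 2 (H × H)).symm (c, d2)⟫
        = ⟪a, c⟫ + ⟪b, d2⟫ := fun _ _ _ _ => rfl
  have hNorm : ∀ a b : H, ‖(WithLp.equiv 2 (H × H)).symm (a, b)‖ ^ 2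
      = ‖a‖ ^ 2 + ‖b‖ ^ 2 := by
    intro a b
    rw [← inner_self_eq_norm_sq (𝕜 := ℂ), ← inner_self_eq_norm_sq (𝕜 := ℂ),
      ← inner_self_eq_norm_sq (𝕜 := ℂ), hIn]
    simp
  have hSA : ∀ j, IsSelfAdjoint (Z j) := by
    intro j
    rw [ContinuousLinearMap.isSelfAdjoint_iff_isSymmetric]
    intro x y
    simp only [ContinuousLinearMap.coe_coe]
    rw [hPmk x, hPmk y]
    induction j using Fin.lastCases with
    | last =>
      rw [hZlast, hZlast, hIn, hIn]
      exact blockAux_symm_last (X (Fin.last d)) s (hsym _) _ _ _ _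
    | cast i =>
      rw [hZ, hZ, hIn, hIn]
      exact blockAux_symm_j (X i.castSucc) (X (Fin.last d)) s (hsym _) (hsym _) _ _ _ _
  have hComm : ∀ j : Fin d, Commute (Z j.castSucc) (Z (Fin.last d)) := by
    intro j
    refine ContinuousLinearMap.ext fun x => ?_
    rw [ContinuousLinearMap.mul_apply, ContinuousLinearMap.mul_apply, hPmk x,
      hZlast, hZ, hZ, hZlast]
    refine congrArg _ (Prod.ext ?_ ?_)
    · exact blockAux_comm1 (X j.castSucc) (X (Fin.last d)) s hs (hsq _) (hsq _) _ _
    · exact blockAux_comm2 (X j.castSucc) (X (Fin.last d)) s hs (hsq _) (hsq _) _ _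
  have hDil : ∀ (j : Fin (d + 1)) (h : H),
      ((WithLp.equiv 2 (H × H)) (Z j ((WithLp.equiv 2 (H × H)).symm (h, 0)))).1 = X j h := by
    intro j h
    induction j using Fin.lastCases with
    | last =>
      rw [hZlast]
      show X (Fin.last d) h + (s:ℂ)⁻¹ • (0:H) = X (Fin.last d) h
      simp
    | cast i =>
      rw [hZ]
      show X i.castSucc h + (s/2:ℂ) •
        ((X (Fin.last d) * X i.castSucc - X i.castSucc * X (Fin.last d)) (0:H))
        = X i.castSucc h
      simp
  refine ⟨hSA, hComm, hDil, ?_, ?_⟩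
  · intro j
    refine blockAux_opNorm_le _ (by positivity) fun x => ?_
    rw [hPmk x, hZ, hNorm, hNorm]
    exact blockAux_norm_j (X j.castSucc) (X (Fin.last d)) s hs
      (hsym _) (hsym _) (hsq _) (hXn _) (hXn _) _ _
  · refine blockAux_opNorm_le _ (by positivity) fun x => ?_
    rw [hPmk x, hZlast, hNorm, hNorm]
    exact le_of_eq (blockAux_norm_last (X (Fin.last d)) s hs (hsym _) (hXn _) _ _)

end BlockDilationMain
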